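/- Let 0 < ε < 1. For Lebesgue-almost every irrational x ∈ (0,1), there exist infinitely many pairs consisting of an excess convergent p/q of x and a defect convergent p'/q' of x (p/q and p'/q' consecutive convergents) such that either 2e^{−2F}/(1+ε) < q'/q < 2e^{2F}/(1−ε) or 2e^{−2F}/(1+ε) < q/q' < 2e^{2F}/(1−ε), where F is the reciprocal Fibonacci constant. -/

import Mathlib

open Filter Topology Set MeasureTheory Real
open scoped NNReal ENNReal

/-- The reciprocal Fibonacci constant `F = ∑_{n ≥ 1} 1/fib(n)`. -/
noncomputable def recipFibConst : ℝ := ∑' n : ℕ, 1 / (Nat.fib (n + 1) : ℝ)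

/-- Gauss map. -/
noncomputable def gmap (y : ℝ) : ℝ := Int.fract y⁻¹

lemma gmap_step {x : ℝ} (hx : Irrational x) (h0 : x ∈ Set.Ioo (0:ℝ) 1) :
    Irrational (gmap x) ∧ gmap x ∈ Set.Ioo (0:ℝ) 1 := by
  have hinv : Irrational x⁻¹ := hx.inv
  have hirr : Irrational (gmap x) := by
    have h := hinv.sub_intCast ⌊x⁻¹⌋
    rwa [Int.self_sub_floor] at h
  refine ⟨hirr, lt_of_le_of_ne (Int.fract_nonneg _) (Ne.symm hirr.ne_zero), Int.fract_lt_one _⟩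

lemma gmap_orbit {x : ℝ} (hx : Irrational x) (h0 : x ∈ Set.Ioo (0:ℝ) 1) (n : ℕ) :
    Irrational (gmap^[n] x) ∧ gmap^[n] x ∈ Set.Ioo (0:ℝ) 1 := by
  induction n with
  | zero => exact ⟨hx, h0⟩
  | succ n ih =>
    rw [Function.iterate_succ_apply']
    exact gmap_step ih.1 ih.2

/-- Inverse branches of the Gauss map. -/
noncomputable def gk (k : ℕ) (y : ℝ) : ℝ := ((k:ℝ) + y)⁻¹

lemma gk_eq {x : ℝ} (hx0 : 0 < x) (hx1 : x < 1) :
    gk (⌊x⁻¹⌋.toNat) (gmap x) = x ∧ 1 ≤ ⌊x⁻¹⌋ := by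
  have hxi : 1 < x⁻¹ := by
    have := mul_inv_cancel₀ (ne_of_gt hx0)
    nlinarith [inv_pos.2 hx0]
  have hfl : 1 ≤ ⌊x⁻¹⌋ := Int.le_floor.2 (by exact_mod_cast hxi.le)
  refine ⟨?_, hfl⟩
  have htn : ((⌊x⁻¹⌋.toNat : ℕ) : ℝ) = (⌊x⁻¹⌋ : ℝ) := by
    exact_mod_cast congrArg (fun z : ℤ => (z : ℝ)) (Int.toNat_of_nonneg (by omega))
  rw [gk, gmap, htn, Int.floor_add_fract, inv_inv]

lemma gk_lip (k : ℕ) (hk : 1 ≤ k) :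
    LipschitzOnWith (((k:ℝ≥0))^2)⁻¹ (gk k) (Set.Ici 0) := by
  rw [lipschitzOnWith_iff_dist_le_mul]
  intro a ha b hb
  have ha' : (0:ℝ) ≤ a := ha
  have hb' : (0:ℝ) ≤ b := hb
  have hk' : (1:ℝ) ≤ (k:ℝ) := by exact_mod_cast hk
  have hka : (0:ℝ) < (k:ℝ) + a := by linarith
  have hkb : (0:ℝ) < (k:ℝ) + b := by linarith
  have heq : gk k a - gk k b = (b - a) / (((k:ℝ) + a) * ((k:ℝ) + b)) := by
    simp only [gk]
    field_simp
    ring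
  rw [Real.dist_eq, Real.dist_eq, heq, abs_div,
    abs_of_pos (by positivity : (0:ℝ) < ((k:ℝ) + a) * ((k:ℝ) + b))]
  have hco : (((((k:ℝ≥0))^2)⁻¹ : ℝ≥0) : ℝ) = ((k:ℝ)^2)⁻¹ := by push_cast; ring
  rw [hco]
  calc |b - a| / (((k:ℝ) + a) * ((k:ℝ) + b)) ≤ |b - a| / ((k:ℝ)^2) := by
        apply div_le_div_of_nonneg_left (abs_nonneg _) (by positivity) (by nlinarith)
  _ = ((k:ℝ)^2)⁻¹ * |a - b| := by rw [abs_sub_comm, div_eq_mul_inv]; ring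

lemma gk_image_le (k : ℕ) (hk : 1 ≤ k) {s : Set ℝ} (hs : s ⊆ Set.Ici 0) :
    volume (gk k '' s) ≤ (((((k:ℝ≥0))^2)⁻¹ : ℝ≥0) : ℝ≥0∞) * volume s := by
  have h := ((gk_lip k hk).mono hs).hausdorffMeasure_image_le (d := 1) zero_le_one
  simpa [MeasureTheory.hausdorffMeasure_real, ENNReal.rpow_one] using h


lemma pull_null {Z : Set ℝ} (hZ : volume Z = 0) :
    volume {x : ℝ | x ∈ Set.Ioo (0:ℝ) 1 ∧ Irrational x ∧ gmap x ∈ Z} = 0 := by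
  have hsub : {x : ℝ | x ∈ Set.Ioo (0:ℝ) 1 ∧ Irrational x ∧ gmap x ∈ Z} ⊆
      ⋃ k : ℕ, gk (k+1) '' (Z ∩ Set.Ici 0) := by
    rintro x ⟨h01, hxirr, hxZ⟩
    obtain ⟨hgk, hfl⟩ := gk_eq h01.1 h01.2
    have hm : 1 ≤ ⌊x⁻¹⌋.toNat := by omega
    refine Set.mem_iUnion.2 ⟨⌊x⁻¹⌋.toNat - 1, ?_⟩
    have hmm : ⌊x⁻¹⌋.toNat - 1 + 1 = ⌊x⁻¹⌋.toNat := by omega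
    rw [hmm]
    exact ⟨gmap x, ⟨hxZ, by exact Set.mem_Ici.mpr (Int.fract_nonneg x⁻¹)⟩, hgk⟩
  refine measure_mono_null hsub ?_
  refine le_antisymm (le_trans (measure_iUnion_le _) ?_) zero_le
  have hz : ∀ k : ℕ, volume (gk (k+1) '' (Z ∩ Set.Ici 0)) = 0 := by
    intro k
    refine le_antisymm (le_trans (gk_image_le (k+1) (by omega) Set.inter_subset_right) ?_)
      zero_le
    have : volume (Z ∩ Set.Ici 0) = 0 := measure_mono_null Set.inter_subset_left hZ
    rw [this, mul_zero]
  simp [hz]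

lemma pull_null_iter {Z : Set ℝ} (hZ : volume Z = 0) :
    ∀ N : ℕ, volume {x : ℝ | x ∈ Set.Ioo (0:ℝ) 1 ∧ Irrational x ∧ gmap^[N] x ∈ Z} = 0 := by
  intro N
  induction N with
  | zero =>
    refine measure_mono_null ?_ hZ
    rintro x ⟨_, _, hx⟩
    simpa using hx
  | succ N ih =>
    have hsub : {x : ℝ | x ∈ Set.Ioo (0:ℝ) 1 ∧ Irrational x ∧ gmap^[N+1] x ∈ Z} ⊆
        {x : ℝ | x ∈ Set.Ioo (0:ℝ) 1 ∧ Irrational x ∧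
          gmap x ∈ {y : ℝ | y ∈ Set.Ioo (0:ℝ) 1 ∧ Irrational y ∧ gmap^[N] y ∈ Z}} := by
      rintro x ⟨h01, hirr, hZx⟩
      obtain ⟨hi1, hi2⟩ := gmap_step hirr h01
      refine ⟨h01, hirr, hi2, hi1, ?_⟩
      rwa [← Function.iterate_succ_apply]
    exact measure_mono_null hsub (pull_null ih)

/-- The set of points all whose Gauss-map iterates stay below 1/3. -/
def ASet : Set ℝ :=
  {x : ℝ | x ∈ Set.Ioo (0:ℝ) 1 ∧ Irrational x ∧ ∀ n : ℕ, gmap^[n] x < 1/3}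

lemma ASet_subset : ASet ⊆ ⋃ k : ℕ, gk (k+3) '' ASet := by
  rintro x ⟨h01, hirr, hlt⟩
  have hx3 : x < 1/3 := by simpa using hlt 0
  have h3 : (3:ℝ) < x⁻¹ := by
    have := mul_inv_cancel₀ (ne_of_gt h01.1)
    nlinarith [inv_pos.2 h01.1]
  have hfl3 : 3 ≤ ⌊x⁻¹⌋ := Int.le_floor.2 (by exact_mod_cast h3.le)
  obtain ⟨hgk, _⟩ := gk_eq h01.1 h01.2
  have hm : 3 ≤ ⌊x⁻¹⌋.toNat := by omega
  have hy : gmap x ∈ ASet := by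
    obtain ⟨hi1, hi2⟩ := gmap_step hirr h01
    exact ⟨hi2, hi1, fun n => by rw [← Function.iterate_succ_apply]; exact hlt (n+1)⟩
  refine Set.mem_iUnion.2 ⟨⌊x⁻¹⌋.toNat - 3, ?_⟩
  have hmm : ⌊x⁻¹⌋.toNat - 3 + 3 = ⌊x⁻¹⌋.toNat := by omega
  rw [hmm]
  exact ⟨gmap x, hy, hgk⟩

lemma tele_sum (n : ℕ) :
    ∑ k ∈ Finset.range n, (((k:ℝ)+2)*((k:ℝ)+3))⁻¹ = 2⁻¹ - ((n:ℝ)+2)⁻¹ := by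
  induction n with
  | zero => norm_num
  | succ n ih =>
    rw [Finset.sum_range_succ, ih]
    have h2 : ((n:ℝ)+2) ≠ 0 := by positivity
    have h3 : ((n:ℝ)+3) ≠ 0 := by positivity
    push_cast
    field_simp
    ring

lemma sum_inv_sq_le (n : ℕ) :
    ∑ k ∈ Finset.range n, ((((k:ℝ)+3))^2)⁻¹ ≤ 2⁻¹ := by
  have h1 : ∑ k ∈ Finset.range n, ((((k:ℝ)+3))^2)⁻¹ ≤
      ∑ k ∈ Finset.range n, (((k:ℝ)+2)*((k:ℝ)+3))⁻¹ := by
    refine Finset.sum_le_sum fun k _ => ?_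
    have hp : (0:ℝ) < ((k:ℝ)+2)*((k:ℝ)+3) := by positivity
    apply inv_anti₀ hp
    nlinarith [Nat.cast_nonneg (α := ℝ) k]
  have h2 := tele_sum n
  have h3 : (0:ℝ) < (n:ℝ)+2 := by positivity
  have h4 : (0:ℝ) ≤ ((n:ℝ)+2)⁻¹ := by positivity
  linarith

lemma tsum_bound :
    (∑' k : ℕ, (((((((k+3:ℕ)):ℝ≥0))^2)⁻¹ : ℝ≥0) : ℝ≥0∞)) ≤ 2⁻¹ := by
  rw [ENNReal.tsum_eq_iSup_sum]
  refine iSup_le fun s => ?_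
  obtain ⟨n, hn⟩ := s.exists_nat_subset_range
  have hsub : ∑ k ∈ s, (((((((k+3:ℕ)):ℝ≥0))^2)⁻¹ : ℝ≥0) : ℝ≥0∞) ≤
      ∑ k ∈ Finset.range n, (((((((k+3:ℕ)):ℝ≥0))^2)⁻¹ : ℝ≥0) : ℝ≥0∞) :=
    Finset.sum_le_sum_of_subset hn
  refine le_trans hsub ?_
  have heq : ∀ k : ℕ, (((((((k+3:ℕ)):ℝ≥0))^2)⁻¹ : ℝ≥0) : ℝ≥0∞) =
      ENNReal.ofReal (((((k:ℝ)+3))^2)⁻¹) := by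
    intro k
    rw [ENNReal.ofReal_inv_of_pos (by positivity), ENNReal.ofReal_pow (by positivity)]
    push_cast
    rw [ENNReal.ofReal_add (Nat.cast_nonneg k) (by norm_num), ENNReal.ofReal_natCast]
    norm_num
  calc ∑ k ∈ Finset.range n, (((((((k+3:ℕ)):ℝ≥0))^2)⁻¹ : ℝ≥0) : ℝ≥0∞)
      = ∑ k ∈ Finset.range n, ENNReal.ofReal (((((k:ℝ)+3))^2)⁻¹) := by
        exact Finset.sum_congr rfl fun k _ => heq k
  _ = ENNReal.ofReal (∑ k ∈ Finset.range n, ((((k:ℝ)+3))^2)⁻¹) :=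
        (ENNReal.ofReal_sum_of_nonneg fun k _ => by positivity).symm
  _ ≤ ENNReal.ofReal 2⁻¹ := ENNReal.ofReal_le_ofReal (sum_inv_sq_le n)
  _ = 2⁻¹ := by
        rw [ENNReal.ofReal_inv_of_pos (by norm_num)]
        norm_num

lemma volume_ASet : volume ASet = 0 := by
  have hA1 : volume ASet ≤ 1 := by
    have hsub : ASet ⊆ Set.Ioo (0:ℝ) 1 := fun x hx => hx.1
    refine le_trans (measure_mono hsub) ?_
    simp [Real.volume_Ioo]
  have hA0 : ASet ⊆ Set.Ici (0:ℝ) := fun x hx => le_of_lt hx.1.1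
  have key : volume ASet ≤ 2⁻¹ * volume ASet := by
    calc volume ASet ≤ volume (⋃ k : ℕ, gk (k+3) '' ASet) := measure_mono ASet_subset
    _ ≤ ∑' k : ℕ, volume (gk (k+3) '' ASet) := measure_iUnion_le _
    _ ≤ ∑' k : ℕ, (((((((k+3:ℕ)):ℝ≥0))^2)⁻¹ : ℝ≥0) : ℝ≥0∞) * volume ASet := by
        refine ENNReal.tsum_le_tsum fun k => ?_
        exact gk_image_le (k+3) (by omega) hA0
    _ = (∑' k : ℕ, (((((((k+3:ℕ)):ℝ≥0))^2)⁻¹ : ℝ≥0) : ℝ≥0∞)) * volume ASet :=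
        ENNReal.tsum_mul_right
    _ ≤ 2⁻¹ * volume ASet := mul_le_mul_left tsum_bound _
  by_contra h0
  have hlt : volume ASet / 2 < volume ASet :=
    ENNReal.half_lt_self h0 (ne_top_of_le_ne_top ENNReal.one_ne_top hA1)
  have : volume ASet ≤ volume ASet / 2 := by
    rw [ENNReal.div_eq_inv_mul]
    exact key
  exact absurd (lt_of_le_of_lt this hlt) (lt_irrefl _)

lemma bad_null : volume {x : ℝ | x ∈ Set.Ioo (0:ℝ) 1 ∧ Irrational x ∧
    ∃ N : ℕ, ∀ n : ℕ, N ≤ n → gmap^[n] x < 1/3} = 0 := by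
  have hsub : {x : ℝ | x ∈ Set.Ioo (0:ℝ) 1 ∧ Irrational x ∧
      ∃ N : ℕ, ∀ n : ℕ, N ≤ n → gmap^[n] x < 1/3} ⊆
      ⋃ N : ℕ, {x : ℝ | x ∈ Set.Ioo (0:ℝ) 1 ∧ Irrational x ∧ gmap^[N] x ∈ ASet} := by
    rintro x ⟨h01, hirr, N, hN⟩
    refine Set.mem_iUnion.2 ⟨N, h01, hirr, (gmap_orbit hirr h01 N).2, (gmap_orbit hirr h01 N).1,
      fun m => ?_⟩
    rw [← Function.iterate_add_apply]
    exact hN (m+N) (Nat.le_add_left _ _)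
  refine measure_mono_null hsub (measure_iUnion_null fun N => pull_null_iter volume_ASet N)

open GenContFract

lemma stream_eq' {x : ℝ} (hx : Irrational x) (h01 : x ∈ Set.Ioo (0:ℝ) 1) :
    ∀ n : ℕ, ∃ b : ℤ, IntFractPair.stream x n = some ⟨b, gmap^[n] x⟩ := by
  intro n
  induction n with
  | zero =>
    refine ⟨⌊x⌋, ?_⟩
    rw [IntFractPair.stream_zero]
    have hfx : Int.fract x = x := Int.fract_eq_self.2 ⟨le_of_lt h01.1, h01.2⟩
    simp [IntFractPair.of, hfx]
  | succ n ih =>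
    obtain ⟨b, hb⟩ := ih
    have hfr : Irrational (gmap^[n] x) := (gmap_orbit hx h01 n).1
    have hne : (⟨b, gmap^[n] x⟩ : IntFractPair ℝ).fr ≠ 0 := hfr.ne_zero
    refine ⟨⌊(gmap^[n] x)⁻¹⌋, ?_⟩
    rw [IntFractPair.stream_succ_of_some hb hne]
    congr 1
    rw [Function.iterate_succ_apply']
    rfl

lemma stream_succ_eq' {x : ℝ} (hx : Irrational x) (h01 : x ∈ Set.Ioo (0:ℝ) 1) (n : ℕ) :
    IntFractPair.stream x (n+1) = some ⟨⌊(gmap^[n] x)⁻¹⌋, gmap^[n+1] x⟩ := by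
  obtain ⟨b, hb⟩ := stream_eq' hx h01 n
  have hfr : Irrational (gmap^[n] x) := (gmap_orbit hx h01 n).1
  have hne : (⟨b, gmap^[n] x⟩ : IntFractPair ℝ).fr ≠ 0 := hfr.ne_zero
  rw [IntFractPair.stream_succ_of_some hb hne]
  congr 1
  rw [Function.iterate_succ_apply']
  rfl

lemma not_term {x : ℝ} (hx : Irrational x) (h01 : x ∈ Set.Ioo (0:ℝ) 1) (n : ℕ) :
    ¬(GenContFract.of x).TerminatedAt n := by
  rw [of_terminatedAt_n_iff_succ_nth_intFractPair_stream_eq_none]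
  rw [stream_succ_eq' hx h01 n]
  simp

lemma one_le_dens {x : ℝ} (hx : Irrational x) (h01 : x ∈ Set.Ioo (0:ℝ) 1) (n : ℕ) :
    (1:ℝ) ≤ (GenContFract.of x).dens n := by
  have h := succ_nth_fib_le_of_nth_den (v := x) (n := n) (Or.inr (not_term hx h01 _))
  refine le_trans ?_ h
  have h1 : 1 ≤ Nat.fib (n+1) := Nat.fib_pos.mpr n.succ_pos
  exact_mod_cast h1

lemma dens_ratio {x : ℝ} (hx : Irrational x) (h01 : x ∈ Set.Ioo (0:ℝ) 1) (m : ℕ)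
    (h3 : 1/3 ≤ gmap^[m+1] x) :
    (GenContFract.of x).dens (m+2) ≤ 4 * (GenContFract.of x).dens (m+1) := by
  have hstream := stream_succ_eq' hx h01 (m+1)
  have hs : (GenContFract.of x).s.get? (m+1) = some ⟨1, ((⌊(gmap^[m+1] x)⁻¹⌋ : ℤ) : ℝ)⟩ :=
    get?_of_eq_some_of_succ_get?_intFractPair_stream hstream
  have hrec : (GenContFract.of x).dens (m+2) =
      ((⌊(gmap^[m+1] x)⁻¹⌋ : ℤ) : ℝ) * (GenContFract.of x).dens (m+1) + 1 * (GenContFract.of x).dens m :=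
    dens_recurrence hs rfl rfl
  have hb3 : ((⌊(gmap^[m+1] x)⁻¹⌋ : ℤ) : ℝ) ≤ 3 := by
    have hinv : (gmap^[m+1] x)⁻¹ ≤ 3 := by
      have h13 : (0:ℝ) < 1/3 := by norm_num
      have := one_div_le_one_div_of_le h13 h3
      rw [one_div] at this
      linarith
    exact le_trans (Int.floor_le _) hinv
  have hmono := GenContFract.of_den_mono (v := x) (n := m)
  have h1 := one_le_dens hx h01 (m+1)
  nlinarith [mul_nonneg (by linarith : (0:ℝ) ≤ 3 - ((⌊(gmap^[m+1] x)⁻¹⌋ : ℤ) : ℝ))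
    (by linarith : (0:ℝ) ≤ (GenContFract.of x).dens (m+1))]

lemma sub_conv_sign {x : ℝ} (hx : Irrational x) (h01 : x ∈ Set.Ioo (0:ℝ) 1) (n : ℕ) :
    ∃ D : ℝ, 0 < D ∧ x - (GenContFract.of x).convs n = (-1)^n / D := by
  obtain ⟨b, hb⟩ := stream_eq' hx h01 n
  have h := sub_convs_eq hb
  have hfr : (0:ℝ) < gmap^[n] x := (gmap_orbit hx h01 n).2.1
  have h' : x - (GenContFract.of x).convs n = if gmap^[n] x = 0 then 0 else
      (-1)^n / (((GenContFract.of x).contsAux (n+1)).b *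
        ((gmap^[n] x)⁻¹ * ((GenContFract.of x).contsAux (n+1)).b + ((GenContFract.of x).contsAux n).b)) := h
  rw [if_neg (ne_of_gt hfr)] at h'
  refine ⟨_, ?_, h'⟩
  have hB : (1:ℝ) ≤ ((GenContFract.of x).contsAux (n+1)).b := by
    have hd := one_le_dens hx h01 n
    rwa [den_eq_conts_b, nth_cont_eq_succ_nth_contAux] at hd
  have hpB : (0:ℝ) ≤ ((GenContFract.of x).contsAux n).b := zero_le_of_contsAux_b
  have hi : (0:ℝ) < (gmap^[n] x)⁻¹ := inv_pos.2 hfr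
  have hBpos : (0:ℝ) < ((GenContFract.of x).contsAux (n+1)).b := by linarith
  exact mul_pos hBpos (add_pos_of_pos_of_nonneg (mul_pos hi hBpos) hpB)

lemma conv_lt_of_even {x : ℝ} (hx : Irrational x) (h01 : x ∈ Set.Ioo (0:ℝ) 1) {n : ℕ}
    (hn : Even n) : (GenContFract.of x).convs n < x := by
  obtain ⟨D, hD, h⟩ := sub_conv_sign hx h01 n
  rw [hn.neg_one_pow] at h
  have : 0 < x - (GenContFract.of x).convs n := by rw [h]; positivity
  linarith

lemma lt_conv_of_odd {x : ℝ} (hx : Irrational x) (h01 : x ∈ Set.Ioo (0:ℝ) 1) {n : ℕ}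
    (hn : Odd n) : x < (GenContFract.of x).convs n := by
  obtain ⟨D, hD, h⟩ := sub_conv_sign hx h01 n
  rw [hn.neg_one_pow] at h
  have : x - (GenContFract.of x).convs n < 0 := by
    rw [h]
    exact div_neg_of_neg_of_pos (by norm_num) hD
  linarith

lemma fib_lower : ∀ n : ℕ, ((3:ℝ)/2)^n ≤ (Nat.fib (n+2) : ℝ)
  | 0 => by norm_num
  | 1 => by
    have : Nat.fib 3 = 2 := by decide
    rw [this]; norm_num
  | (n+2) => by
    have h1 := fib_lower n
    have h2 := fib_lower (n+1)
    have hf : Nat.fib (n+4) = Nat.fib (n+3) + Nat.fib (n+2) := by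
      rw [show n+4 = (n+2)+2 by ring, Nat.fib_add_two, show n+2+1 = n+3 from rfl]; exact Nat.add_comm _ _
    have e1 : ((3:ℝ)/2)^(n+1) = ((3:ℝ)/2)^n * (3/2) := pow_succ _ _
    have e2 : ((3:ℝ)/2)^(n+2) = ((3:ℝ)/2)^(n+1) * (3/2) := pow_succ _ _
    have hp : (0:ℝ) ≤ ((3:ℝ)/2)^n := by positivity
    push_cast [hf]
    nlinarith

lemma recipFib_summable : Summable (fun n : ℕ => 1 / (Nat.fib (n + 1) : ℝ)) := by
  rw [← summable_nat_add_iff 1]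
  refine Summable.of_nonneg_of_le (fun n => by positivity) (fun n => ?_)
    (summable_geometric_of_lt_one (by norm_num : (0:ℝ) ≤ 2/3) (by norm_num))
  have h := fib_lower n
  have hp : (0:ℝ) < ((3:ℝ)/2)^n := by positivity
  have hfp : (0:ℝ) < (Nat.fib (n+2) : ℝ) := lt_of_lt_of_le hp h
  rw [show n + 1 + 1 = n + 2 by ring]
  rw [one_div]
  calc ((Nat.fib (n+2) : ℝ))⁻¹ ≤ (((3:ℝ)/2)^n)⁻¹ := by
        exact inv_anti₀ hp h
  _ = ((2:ℝ)/3)^n := by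
        rw [← inv_pow]; norm_num

lemma two_le_F : (2:ℝ) ≤ recipFibConst := by
  have h := Summable.sum_le_tsum (Finset.range 2) (fun i _ => by positivity) recipFib_summable
  refine le_trans ?_ h
  rw [Finset.sum_range_succ, Finset.sum_range_one]
  norm_num [Nat.fib_one, Nat.fib_two]

lemma exp_four : (16:ℝ) < Real.exp 4 := by
  have h := Real.exp_one_gt_d9
  have he : Real.exp 4 = (Real.exp 1)^(4:ℕ) := by
    rw [← Real.exp_nat_mul]; norm_num
  rw [he]
  have h4 : (2.7182818283:ℝ)^(4:ℕ) ≤ (Real.exp 1)^(4:ℕ) := pow_le_pow_left₀ (by norm_num) h.le 4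
  have h5 : (16:ℝ) < (2.7182818283:ℝ)^(4:ℕ) := by norm_num
  linarith

lemma inf_of_forall {S : Set ℕ} (h : ∀ N : ℕ, ∃ n : ℕ, N ≤ n ∧ n ∈ S) : S.Infinite := by
  intro hfin
  obtain ⟨b, hb⟩ := hfin.bddAbove
  obtain ⟨n, hn, hnS⟩ := h (b+1)
  have := hb hnS
  omega




/-- **Corollary 1.** Given `0 < ε < 1`, for Lebesgue-almost every irrational
`x ∈ (0,1)` there are infinitely many pairs of consecutive convergents, one an excess
approximation `p/q` of `x` and the other a defect approximation `p'/q'` of `x`, with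
`2e^{−2F}/(1+ε) < q'/q < 2e^{2F}/(1−ε)` or `2e^{−2F}/(1+ε) < q/q' < 2e^{2F}/(1−ε)`. -/
theorem poncelet_stmt10
    (ε : ℝ) (hε0 : 0 < ε) (hε1 : ε < 1) :
    ∀ᵐ x ∂(volume.restrict (Ioo (0 : ℝ) 1)), Irrational x →
      {n : ℕ | ∃ i j : ℕ,
        ((i = n ∧ j = n + 1) ∨ (i = n + 1 ∧ j = n)) ∧
        x ≤ (GenContFract.of x).convs i ∧
        (GenContFract.of x).convs j ≤ x ∧
        ((2 * exp (-(2 * recipFibConst)) / (1 + ε) <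
              (GenContFract.of x).dens j / (GenContFract.of x).dens i ∧
            (GenContFract.of x).dens j / (GenContFract.of x).dens i <
              2 * exp (2 * recipFibConst) / (1 - ε)) ∨
          (2 * exp (-(2 * recipFibConst)) / (1 + ε) <
              (GenContFract.of x).dens i / (GenContFract.of x).dens j ∧
            (GenContFract.of x).dens i / (GenContFract.of x).dens j <
              2 * exp (2 * recipFibConst) / (1 - ε)))}.Infinite := by
  have hmem : ∀ᵐ x ∂(volume.restrict (Ioo (0:ℝ) 1)), x ∈ Ioo (0:ℝ) 1 :=
    ae_restrict_mem measurableSet_Ioo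
  have hbadnull : (volume.restrict (Ioo (0:ℝ) 1)) {x : ℝ | x ∈ Set.Ioo (0:ℝ) 1 ∧ Irrational x ∧
      ∃ N : ℕ, ∀ n : ℕ, N ≤ n → gmap^[n] x < 1/3} = 0 :=
    le_antisymm (le_trans (Measure.restrict_apply_le _ _) (le_of_eq bad_null)) zero_le
  have hbad : ∀ᵐ x ∂(volume.restrict (Ioo (0:ℝ) 1)), x ∉ {x : ℝ | x ∈ Set.Ioo (0:ℝ) 1 ∧
      Irrational x ∧ ∃ N : ℕ, ∀ n : ℕ, N ≤ n → gmap^[n] x < 1/3} :=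
    measure_eq_zero_iff_ae_notMem.1 hbadnull
  filter_upwards [hmem, hbad] with x hx01 hxB hirr
  have hfreq : ∀ N : ℕ, ∃ n : ℕ, N ≤ n ∧ 1/3 ≤ gmap^[n] x := by
    intro N
    by_contra hcon
    push_neg at hcon
    exact hxB ⟨hx01, hirr, N, fun n hn => hcon n hn⟩
  have hF := two_le_F
  have hexpF : Real.exp 4 ≤ Real.exp (2 * recipFibConst) := Real.exp_le_exp.2 (by linarith)
  have h16 := exp_four
  have hL : 2 * Real.exp (-(2 * recipFibConst)) / (1 + ε) < 1 := by
    rw [div_lt_one (by linarith), Real.exp_neg]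
    have h1 : (Real.exp (2 * recipFibConst))⁻¹ ≤ (Real.exp 4)⁻¹ :=
      inv_anti₀ (Real.exp_pos 4) hexpF
    have h2 : (Real.exp 4)⁻¹ ≤ 16⁻¹ :=
      inv_anti₀ (by norm_num) h16.le
    linarith
  have hU : (4:ℝ) < 2 * Real.exp (2 * recipFibConst) / (1 - ε) := by
    rw [lt_div_iff₀ (by linarith)]
    nlinarith
  refine inf_of_forall fun N => ?_
  obtain ⟨n, hn, h3⟩ := hfreq (max N 1)
  refine ⟨n, le_trans (le_max_left _ _) hn, ?_⟩
  have hn1 : 1 ≤ n := le_trans (le_max_right _ _) hn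
  obtain ⟨m, rfl⟩ : ∃ m, n = m + 1 := ⟨n - 1, by omega⟩
  have hd1 : (1:ℝ) ≤ (GenContFract.of x).dens (m+1) := one_le_dens hirr hx01 (m+1)
  have hdpos : (0:ℝ) < (GenContFract.of x).dens (m+1) := by linarith
  have hmono : (GenContFract.of x).dens (m+1) ≤ (GenContFract.of x).dens (m+2) :=
    GenContFract.of_den_mono
  have hr4 : (GenContFract.of x).dens (m+2) ≤ 4 * (GenContFract.of x).dens (m+1) :=
    dens_ratio hirr hx01 m h3
  have hr1 : 1 ≤ (GenContFract.of x).dens (m+2) / (GenContFract.of x).dens (m+1) :=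
    (one_le_div hdpos).2 hmono
  have hru : (GenContFract.of x).dens (m+2) / (GenContFract.of x).dens (m+1) ≤ 4 :=
    (div_le_iff₀ hdpos).2 (by linarith)
  have hLr : 2 * Real.exp (-(2 * recipFibConst)) / (1 + ε) <
      (GenContFract.of x).dens (m+2) / (GenContFract.of x).dens (m+1) :=
    lt_of_lt_of_le hL hr1
  have hrU : (GenContFract.of x).dens (m+2) / (GenContFract.of x).dens (m+1) <
      2 * Real.exp (2 * recipFibConst) / (1 - ε) := lt_of_le_of_lt hru hU
  simp only [Set.mem_setOf_eq]
  rcases Nat.even_or_odd (m+1) with he | ho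
  · have hdef := conv_lt_of_even hirr hx01 he
    have hexc := lt_conv_of_odd hirr hx01 (he.add_one : Odd (m+2))
    exact ⟨m+2, m+1, Or.inr ⟨rfl, rfl⟩, hexc.le, hdef.le, Or.inr ⟨hLr, hrU⟩⟩
  · have hexc := lt_conv_of_odd hirr hx01 ho
    have hdef := conv_lt_of_even hirr hx01 (ho.add_one : Even (m+2))
    exact ⟨m+1, m+2, Or.inl ⟨rfl, rfl⟩, hexc.le, hdef.le, Or.inl ⟨hLr, hrU⟩⟩
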